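/- Gradient estimate for the N+1 player game in integral form: Suppose w: [0,T] → [0,∞) is continuous, satisfies w(T) ≤ C/N, and w(t) ≤ w(T) + ∫_t^T [Cw(s) + CNw(s)² + C/N] ds for all t ∈ [0,T], where C > 0 and N ∈ ℕ. If T ≤ T* := 1/(2C + 4C² + 1), then w(t) ≤ 2C/N for all t ∈ [0,T]. -/

import Mathlib

open Set Filter Topology

/-- Gradient estimate for the N+1 player game in integral form:
if `w(T) ≤ C/N` and `w(t) ≤ w(T) + ∫_t^T [Cw + CNw² + C/N] ds`, then
`w ≤ 2C/N` on `[0,T]` provided `T ≤ T* = 1/(2C + 4C² + 1)`. -/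
theorem gradient_estimate_integral_form (C T : ℝ) (N : ℕ) (hC : 0 < C)
    (hN : 0 < N) (hT0 : 0 ≤ T) (w : ℝ → ℝ)
    (hwc : ContinuousOn w (Icc 0 T))
    (hwpos : ∀ t ∈ Icc 0 T, 0 ≤ w t)
    (hwT : w T ≤ C / N)
    (hwint : ∀ t ∈ Icc 0 T,
      w t ≤ w T + ∫ s in t..T, (C * w s + C * N * (w s) ^ 2 + C / N))
    (hTstar : T ≤ 1 / (2 * C + 4 * C ^ 2 + 1)) :
    ∀ t ∈ Icc 0 T, w t ≤ 2 * C / N := by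
  have hN1 : (1:ℝ) ≤ (N:ℝ) := by exact_mod_cast hN
  have hNpos : (0:ℝ) < N := by positivity
  have hCN : (0:ℝ) < C / N := by positivity
  have h2CN : 2 * C / (N:ℝ) = C / N + C / N := by ring
  set K : ℝ := C / N * (2 * C + 4 * C ^ 2 + 1) with hK
  have hKpos : 0 < K := by positivity
  have hTK : T * K ≤ C / N := by
    have hden : (0:ℝ) < 2 * C + 4 * C ^ 2 + 1 := by positivity
    calc T * K ≤ (1 / (2 * C + 4 * C ^ 2 + 1)) * K := by
          apply mul_le_mul_of_nonneg_right hTstar (le_of_lt hKpos)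
      _ = C / N := by rw [hK]; field_simp
  -- key self-improvement lemma
  have key : ∀ t ∈ Icc 0 T, (∀ s ∈ Icc t T, w s ≤ 2 * C / N) →
      w t ≤ C / N + (T - t) * K := by
    intro t ht hb
    have htT : t ≤ T := ht.2
    have hsub : Icc t T ⊆ Icc 0 T := Icc_subset_Icc ht.1 le_rfl
    have hint1 : IntervalIntegrable (fun s => C * w s + C * N * (w s)^2 + C / N)
        MeasureTheory.volume t T := by
      apply ContinuousOn.intervalIntegrable
      rw [uIcc_of_le htT]
      exact (((continuousOn_const.mul (hwc.mono hsub)).add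
        (continuousOn_const.mul ((hwc.mono hsub).pow 2))).add continuousOn_const)
    have hmono : (∫ s in t..T, (C * w s + C * N * (w s)^2 + C / N))
        ≤ ∫ _ in t..T, K := by
      apply intervalIntegral.integral_mono_on htT hint1 intervalIntegrable_const
      intro s hs
      have h0 : 0 ≤ w s := hwpos s (hsub hs)
      have h2 : w s ≤ 2 * C / N := hb s hs
      have hsq : (w s)^2 ≤ (2 * C / N)^2 := by nlinarith
      have h3 : C * N * (w s)^2 ≤ C * N * (2*C/N)^2 :=
        mul_le_mul_of_nonneg_left hsq (by positivity)
      have h1 : C * w s ≤ C * (2*C/N) := mul_le_mul_of_nonneg_left h2 hC.le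
      have e : C * (2*C/N) + C * N * (2*C/N)^2 + C/N = K := by
        rw [hK]; field_simp; ring
      linarith
    have h4 := hwint t ht
    rw [intervalIntegral.integral_const] at hmono
    simp only [smul_eq_mul] at hmono
    linarith
  set A : Set ℝ := {t | t ∈ Icc 0 T ∧ ∀ s ∈ Icc t T, w s ≤ 2 * C / N} with hA
  have hTA : T ∈ A := by
    refine ⟨⟨hT0, le_rfl⟩, ?_⟩
    intro s hs
    have hsT : s = T := le_antisymm hs.2 hs.1
    rw [hsT]; linarith
  have hAne : A.Nonempty := ⟨T, hTA⟩
  have hAbdd : BddBelow A := ⟨0, fun x hx => hx.1.1⟩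
  set τ := sInf A with hτ
  have hτ0 : 0 ≤ τ := le_csInf hAne (fun x hx => hx.1.1)
  have hτT : τ ≤ T := csInf_le hAbdd hTA
  have hτmem : τ ∈ Icc 0 T := ⟨hτ0, hτT⟩
  have step1a : ∀ s ∈ Ioc τ T, w s ≤ 2 * C / N := by
    intro s hs
    obtain ⟨t, htA, hts⟩ := (csInf_lt_iff hAbdd hAne).mp hs.1
    exact htA.2 s ⟨hts.le, hs.2⟩
  have hwτ : w τ ≤ 2 * C / N := by
    rcases eq_or_lt_of_le hτT with h | h
    · rw [h]; linarith
    · have hc : ContinuousWithinAt w (Icc 0 T) τ := hwc τ hτmem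
      have hc' : Tendsto w (𝓝[Ioc τ T] τ) (𝓝 (w τ)) :=
        hc.mono_left (nhdsWithin_mono _ (fun x hx => ⟨le_trans hτ0 hx.1.le, hx.2⟩))
      haveI : (𝓝[Ioc τ T] τ).NeBot := by
        rw [nhdsWithin_Ioc_eq_nhdsGT h]
        infer_instance
      refine le_of_tendsto hc' ?_
      filter_upwards [self_mem_nhdsWithin] with x hx
      exact step1a x hx
  have step1 : ∀ s ∈ Icc τ T, w s ≤ 2 * C / N := by
    intro s hs
    rcases eq_or_lt_of_le hs.1 with h | h
    · rw [← h]; exact hwτ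
    · exact step1a s ⟨h, hs.2⟩
  have hτ_eq : τ = 0 := by
    by_contra hne
    have hτpos : 0 < τ := lt_of_le_of_ne hτ0 (Ne.symm hne)
    have hwτlt : w τ < 2 * C / N := by
      have hk := key τ hτmem step1
      have hTτ : (T - τ) * K = T * K - τ * K := by ring
      linarith [mul_pos hτpos hKpos, hTK]
    have hc : ContinuousWithinAt w (Icc 0 T) τ := hwc τ hτmem
    have hmem : w ⁻¹' (Iio (2 * C / N)) ∈ 𝓝[Icc 0 T] τ := hc (Iio_mem_nhds hwτlt)
    rw [Metric.mem_nhdsWithin_iff] at hmem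
    obtain ⟨ε, hε, hball⟩ := hmem
    set t0 := max 0 (τ - ε / 2) with ht0
    have ht0lt : t0 < τ := max_lt hτpos (by linarith)
    have ht0A : t0 ∈ A := by
      refine ⟨⟨le_max_left _ _, le_trans ht0lt.le hτT⟩, ?_⟩
      intro s hs
      rcases le_or_gt τ s with h | h
      · exact step1 s ⟨h, hs.2⟩
      · have hs0 : 0 ≤ s := le_trans (le_max_left _ _) hs.1
        have hsmem : s ∈ Metric.ball τ ε := by
          rw [Metric.mem_ball, Real.dist_eq, abs_lt]
          have h5 : τ - ε / 2 ≤ t0 := le_max_right _ _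
          have h6 : t0 ≤ s := hs.1
          constructor <;> linarith
        exact le_of_lt (hball ⟨hsmem, hs0, hs.2⟩)
    have : τ ≤ t0 := csInf_le hAbdd ht0A
    linarith
  rw [hτ_eq] at step1
  exact step1
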